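/- Let (D_n) be consecutive intervals with |D_n| = 2·n! and define μ_n uniform with value 1/n! on the first n! elements of D_n (zero elsewhere) and ν_n uniform with value 1/n! on the last n! elements of D_n (zero elsewhere). Then Exh(sup_n μ_n) is increasing-invariant, Exh(sup_n ν_n) is not increasing-invariant, and the two ideals are isomorphic (there is a bijection φ: ℕ → ℕ with A ∈ Exh(sup μ_n) ⟺ φ^{-1}[A] ∈ Exh(sup ν_n)). -/

import Mathlib

open Filter Finset Topology

/-- `cnt A n = |A ∩ [0,n)|`. -/
noncomputable def cnt (A : Set ℕ) (n : ℕ) : ℕ := (A ∩ Set.Iio n).ncard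

/-- The simple density ideal associated to a weight `g`. -/
def Zg (g : ℕ → ℝ) : Set (Set ℕ) :=
  {A | Tendsto (fun n => (cnt A n : ℝ) / g n) atTop (𝓝 0)}

/-- The ideal of asymptotic density zero sets. -/
def Zid : Set (Set ℕ) :=
  {A | Tendsto (fun n => (cnt A n : ℝ) / n) atTop (𝓝 0)}

/-- An ideal is increasing-invariant. -/
def IncInv (I : Set (Set ℕ)) : Prop :=
  ∀ B ∈ I, ∀ C : Set ℕ, (∀ n, cnt C n ≤ cnt B n) → C ∈ I

/-- Tallness. -/
def Tall (I : Set (Set ℕ)) : Prop :=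
  ∀ A : Set ℕ, A.Infinite → ∃ B ⊆ A, B.Infinite ∧ B ∈ I

/-- The conditions on `f` for the Erdős–Ulam ideal `EU f` to be defined. -/
def EUcond (f : ℕ → ℝ) : Prop :=
  (∀ n, 0 ≤ f n) ∧ Tendsto (fun n => ∑ i ∈ Finset.range n, f i) atTop atTop ∧
    Tendsto (fun n => f n / ∑ i ∈ Finset.range (n + 1), f i) atTop (𝓝 0)

/-- The Erdős–Ulam ideal associated to `f`. -/
def EU (f : ℕ → ℝ) : Set (Set ℕ) :=
  {A | Tendsto
    (fun n => (∑ i ∈ Finset.range n, Set.indicator A f i) / ∑ i ∈ Finset.range n, f i)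
    atTop (𝓝 0)}

/-- Being an Erdős–Ulam ideal. -/
def IsEUIdeal (I : Set (Set ℕ)) : Prop := ∃ f : ℕ → ℝ, EUcond f ∧ I = EU f
/-- Left endpoints of the consecutive intervals `D_n` of length `2·n!`. -/
def s18 (n : ℕ) : ℕ := ∑ k ∈ Finset.range n, 2 * k.factorial

/-- Measure uniform with value `1/n!` on the first `n!` elements of `D_n`. -/
noncomputable def mu18 (n : ℕ) (A : Set ℕ) : ℝ :=
  ∑ i ∈ Finset.Ico (s18 n) (s18 n + n.factorial),
    Set.indicator A (fun _ => (1 : ℝ) / n.factorial) i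

/-- Measure uniform with value `1/n!` on the last `n!` elements of `D_n`. -/
noncomputable def nu18 (n : ℕ) (A : Set ℕ) : ℝ :=
  ∑ i ∈ Finset.Ico (s18 n + n.factorial) (s18 (n + 1)),
    Set.indicator A (fun _ => (1 : ℝ) / n.factorial) i

section AUX
open scoped Classical

lemma s18_succ (n : ℕ) : s18 (n+1) = s18 n + 2 * n.factorial := by
  simp [s18, Finset.sum_range_succ]

lemma s18_mono : Monotone s18 :=
  monotone_nat_of_le_succ fun n => by rw [s18_succ]; omega

lemma s18_ge (n : ℕ) : 2 * n ≤ s18 n := by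
  induction n with
  | zero => simp [s18]
  | succ n ih =>
    rw [s18_succ]
    have := Nat.one_le_iff_ne_zero.mpr (Nat.factorial_ne_zero n)
    omega

lemma s18_le (n : ℕ) : s18 n ≤ 2 * n.factorial := by
  induction n with
  | zero => simp [s18]
  | succ n ih =>
    rw [s18_succ]
    rcases Nat.eq_zero_or_pos n with h | h
    · subst h; simp [s18]
    · have h2 : 2 * n.factorial ≤ (n+1).factorial := by
        rw [Nat.factorial_succ]; exact Nat.mul_le_mul_right _ (by omega)
      omega

lemma ex_idx (m : ℕ) : ∃ n, m < s18 (n+1) :=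
  ⟨m, lt_of_lt_of_le (by omega) (s18_ge (m+1))⟩

def idx (m : ℕ) : ℕ := Nat.find (ex_idx m)

lemma idx_lt (m : ℕ) : m < s18 (idx m + 1) := Nat.find_spec (ex_idx m)

lemma idx_le (m : ℕ) : s18 (idx m) ≤ m := by
  rcases Nat.eq_zero_or_pos (idx m) with h | h
  · rw [h]; simp [s18]
  · by_contra hc
    push_neg at hc
    have : idx m ≤ idx m - 1 := Nat.find_le (by
      have : idx m - 1 + 1 = idx m := by omega
      rw [this]; exact hc)
    omega

lemma idx_eq {m n : ℕ} (h1 : s18 n ≤ m) (h2 : m < s18 (n+1)) : idx m = n := by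
  have hle : idx m ≤ n := Nat.find_le h2
  rcases Nat.lt_or_ge (idx m) n with h | h
  · have : s18 (idx m + 1) ≤ s18 n := s18_mono (by omega)
    have := idx_lt m
    omega
  · omega

def phi (m : ℕ) : ℕ :=
  if m < s18 (idx m) + (idx m).factorial then m + (idx m).factorial
  else m - (idx m).factorial

lemma phi_first {m n : ℕ} (h1 : s18 n ≤ m) (h2 : m < s18 n + n.factorial) :
    phi m = m + n.factorial := by
  have hidx : idx m = n := idx_eq h1 (by rw [s18_succ]; omega)
  rw [phi, hidx, if_pos h2]

lemma phi_second {m n : ℕ} (h1 : s18 n + n.factorial ≤ m) (h2 : m < s18 (n+1)) :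
    phi m = m - n.factorial := by
  have hidx : idx m = n := idx_eq (by omega) h2
  rw [phi, hidx, if_neg (by omega)]

lemma phi_invol : Function.Involutive phi := by
  intro m
  set n := idx m with hn
  have h1 : s18 n ≤ m := idx_le m
  have h2 : m < s18 (n+1) := idx_lt m
  rw [s18_succ] at h2
  by_cases h : m < s18 n + n.factorial
  · have e1 : phi m = m + n.factorial := phi_first h1 h
    have e2 : phi (m + n.factorial) = m + n.factorial - n.factorial :=
      phi_second (n := n) (by omega) (by rw [s18_succ]; omega)
    rw [e1, e2]; omega
  · have e1 : phi m = m - n.factorial := phi_second (n := n) (by omega) (by rw [s18_succ]; omega)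
    have e2 : phi (m - n.factorial) = m - n.factorial + n.factorial :=
      phi_first (n := n) (by omega) (by omega)
    rw [e1, e2]
    have := Nat.factorial_pos n
    omega

lemma phi_bij : Function.Bijective phi := phi_invol.bijective

end AUX

section AUX2
open scoped Classical

noncomputable def cntF (A : Set ℕ) (k : ℕ) : ℕ :=
  ((Finset.range k).filter (fun i => i ∈ A)).card

lemma cnt_eq (A : Set ℕ) (k : ℕ) : cnt A k = cntF A k := by
  rw [cnt, cntF, ← Set.ncard_coe_finset]
  congr 1
  ext x
  simp [and_comm]

lemma sum_ind (A : Set ℕ) (c : ℝ) (F : Finset ℕ) :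
    ∑ i ∈ F, Set.indicator A (fun _ => c) i = ((F.filter (fun i => i ∈ A)).card : ℝ) * c := by
  calc ∑ i ∈ F, Set.indicator A (fun _ => c) i
      = ∑ i ∈ F, (if i ∈ A then c else 0) := by
        apply Finset.sum_congr rfl; intro i _; simp [Set.indicator_apply]
    _ = ∑ _i ∈ F.filter (fun i => i ∈ A), c := (Finset.sum_filter _ _).symm
    _ = _ := by rw [Finset.sum_const, nsmul_eq_mul]

lemma cntF_split (A : Set ℕ) {a b : ℕ} (h : a ≤ b) :
    cntF A b = cntF A a + ((Finset.Ico a b).filter (fun i => i ∈ A)).card := by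
  rw [cntF, cntF, Finset.range_eq_Ico,
    ← Finset.Ico_union_Ico_eq_Ico (Nat.zero_le a) h, Finset.filter_union,
    Finset.card_union_of_disjoint]
  · rw [Finset.range_eq_Ico]
  exact Finset.disjoint_filter_filter (p := fun i => i ∈ A) (q := fun i => i ∈ A) (Finset.Ico_disjoint_Ico_consecutive 0 a b)

lemma mu18_eq (n : ℕ) (A : Set ℕ) :
    mu18 n A = (((Finset.Ico (s18 n) (s18 n + n.factorial)).filter (fun i => i ∈ A)).card : ℝ)
      / n.factorial := by
  rw [mu18, sum_ind, mul_one_div]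

lemma mu18_nonneg (n : ℕ) (A : Set ℕ) : 0 ≤ mu18 n A := by
  rw [mu18_eq]; positivity

lemma mu_incinv : IncInv {A : Set ℕ | Tendsto (fun n => mu18 n A) atTop (𝓝 0)} := by
  intro B hB C hC
  simp only [Set.mem_setOf_eq] at hB ⊢
  have hbound : Tendsto (fun n : ℕ => mu18 n B + 4 / n) atTop (𝓝 0) := by
    have := hB.add (tendsto_const_div_atTop_nhds_zero_nat 4)
    simpa using this
  apply squeeze_zero' (Eventually.of_forall fun n => mu18_nonneg n C) _ hbound
  filter_upwards [eventually_ge_atTop 1] with n hn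
  obtain ⟨m, rfl⟩ : ∃ m, n = m + 1 := ⟨n - 1, by omega⟩
  set n := m + 1
  set f := n.factorial with hf
  set s := s18 n with hs
  -- ℕ inequality
  have h1 : ((Finset.Ico s (s + f)).filter (fun i => i ∈ C)).card
      ≤ s + ((Finset.Ico s (s + f)).filter (fun i => i ∈ B)).card := by
    have e1 : cntF C (s + f) = cntF C s + ((Finset.Ico s (s + f)).filter (fun i => i ∈ C)).card :=
      cntF_split C (by omega)
    have e2 : cntF B (s + f) = cntF B s + ((Finset.Ico s (s + f)).filter (fun i => i ∈ B)).card :=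
      cntF_split B (by omega)
    have e3 : cntF C (s + f) ≤ cntF B (s + f) := by
      rw [← cnt_eq, ← cnt_eq]; exact hC _
    have e4 : cntF B s ≤ s := le_trans (Finset.card_filter_le _ _) (by simp)
    omega
  -- s / f ≤ 4 / n
  have hnat : s * n ≤ 4 * f := by
    have hA : s ≤ 4 * m.factorial := by
      have := s18_le m
      rw [hs, s18_succ]; omega
    calc s * n ≤ 4 * m.factorial * n := Nat.mul_le_mul_right _ hA
      _ = 4 * f := by rw [hf, Nat.factorial_succ]; ring
  have hfpos : (0:ℝ) < (f : ℝ) := by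
    exact_mod_cast Nat.factorial_pos n
  have hnpos : (0:ℝ) < (n : ℝ) := by positivity
  have hsf : (s : ℝ) / f ≤ 4 / n := by
    rw [div_le_div_iff₀ hfpos hnpos]
    exact_mod_cast hnat
  calc mu18 n C
      = (((Finset.Ico s (s + f)).filter (fun i => i ∈ C)).card : ℝ) / f := mu18_eq n C
    _ ≤ ((s : ℝ) + ((Finset.Ico s (s + f)).filter (fun i => i ∈ B)).card) / f := by
        gcongr
        exact_mod_cast h1
    _ = (s : ℝ) / f + (((Finset.Ico s (s + f)).filter (fun i => i ∈ B)).card : ℝ) / f :=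
        add_div _ _ _
    _ ≤ 4 / n + mu18 n B := by rw [mu18_eq n B]; exact add_le_add_left hsf _
    _ = mu18 n B + 4 / n := add_comm _ _

end AUX2

section AUX3
open scoped Classical

def FH18 : Set ℕ := {m | ∃ n, s18 n ≤ m ∧ m < s18 n + n.factorial}
def SH18 : Set ℕ := {m | ∃ n, s18 n + n.factorial ≤ m ∧ m < s18 (n + 1)}

lemma nu18_FH (n : ℕ) : nu18 n FH18 = 0 := by
  rw [nu18]
  apply Finset.sum_eq_zero
  intro i hi
  rw [Finset.mem_Ico] at hi
  apply Set.indicator_of_notMem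
  rintro ⟨k, hk1, hk2⟩
  have e1 : idx i = n := idx_eq (by omega) hi.2
  have e2 : idx i = k := idx_eq hk1 (by rw [s18_succ]; omega)
  have : k = n := by omega
  subst this
  omega

lemma nu18_SH (n : ℕ) : nu18 n SH18 = 1 := by
  have hcard : (Finset.Ico (s18 n + n.factorial) (s18 (n + 1))).card = n.factorial := by
    rw [Nat.card_Ico, s18_succ]; omega
  rw [nu18]
  have : ∀ i ∈ Finset.Ico (s18 n + n.factorial) (s18 (n + 1)),
      Set.indicator SH18 (fun _ => (1:ℝ) / n.factorial) i = (1:ℝ) / n.factorial := by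
    intro i hi
    rw [Finset.mem_Ico] at hi
    have hmem : i ∈ SH18 := ⟨n, hi.1, hi.2⟩
    exact Set.indicator_of_mem hmem _
  rw [Finset.sum_congr rfl this, Finset.sum_const, hcard, nsmul_eq_mul]
  have : (n.factorial : ℝ) ≠ 0 := by exact_mod_cast (Nat.factorial_pos n).ne'
  field_simp

lemma cnt_SH_le_FH (m : ℕ) : cnt SH18 m ≤ cnt FH18 m := by
  rw [cnt_eq, cnt_eq, cntF, cntF]
  apply Finset.card_le_card_of_injOn phi
  · intro i hi
    rw [Finset.mem_coe, Finset.mem_filter, Finset.mem_range] at hi ⊢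
    obtain ⟨him, n, h1, h2⟩ := hi
    rw [s18_succ] at h2
    have e : phi i = i - n.factorial := phi_second h1 (by rw [s18_succ]; omega)
    have hfpos := Nat.factorial_pos n
    refine ⟨by omega, n, by omega, by omega⟩
  · exact phi_bij.injective.injOn

lemma nu_not_incinv : ¬ IncInv {A : Set ℕ | Tendsto (fun n => nu18 n A) atTop (𝓝 0)} := by
  intro h
  have hFH : FH18 ∈ {A : Set ℕ | Tendsto (fun n => nu18 n A) atTop (𝓝 0)} := by
    simp only [Set.mem_setOf_eq]
    have : (fun n => nu18 n FH18) = fun _ => (0:ℝ) := funext nu18_FH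
    rw [this]; exact tendsto_const_nhds
  have hSH := h FH18 hFH SH18 cnt_SH_le_FH
  simp only [Set.mem_setOf_eq] at hSH
  have : (fun n => nu18 n SH18) = fun _ => (1:ℝ) := funext nu18_SH
  rw [this] at hSH
  have := tendsto_nhds_unique hSH tendsto_const_nhds
  norm_num at this

lemma nu18_phi (n : ℕ) (A : Set ℕ) : nu18 n (phi ⁻¹' A) = mu18 n A := by
  rw [nu18, mu18, Finset.sum_Ico_eq_sum_range, Finset.sum_Ico_eq_sum_range]
  have e1 : s18 (n + 1) - (s18 n + n.factorial) = n.factorial := by rw [s18_succ]; omega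
  have e2 : s18 n + n.factorial - s18 n = n.factorial := by omega
  rw [e1, e2]
  apply Finset.sum_congr rfl
  intro j hj
  rw [Finset.mem_range] at hj
  have e : phi (s18 n + n.factorial + j) = s18 n + j := by
    have := phi_second (n := n) (m := s18 n + n.factorial + j) (by omega)
      (by rw [s18_succ]; omega)
    omega
  simp only [Set.indicator_apply, Set.mem_preimage, e]


end AUX3

/-- `Exh(sup μ_n)` is increasing-invariant, `Exh(sup ν_n)` is not,
and the two (Erdős–Ulam) ideals are isomorphic. -/
theorem stmt_18 :
    IncInv {A : Set ℕ | Tendsto (fun n => mu18 n A) atTop (𝓝 0)} ∧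
    ¬ IncInv {A : Set ℕ | Tendsto (fun n => nu18 n A) atTop (𝓝 0)} ∧
    ∃ φ : ℕ → ℕ, Function.Bijective φ ∧
      ∀ A : Set ℕ, A ∈ {A : Set ℕ | Tendsto (fun n => mu18 n A) atTop (𝓝 0)} ↔
        φ ⁻¹' A ∈ {A : Set ℕ | Tendsto (fun n => nu18 n A) atTop (𝓝 0)} := by
  refine ⟨mu_incinv, nu_not_incinv, phi, phi_bij, fun A => ?_⟩
  have h : (fun n => nu18 n (phi ⁻¹' A)) = fun n => mu18 n A := funext fun n => nu18_phi n A
  simp only [Set.mem_setOf_eq, h]
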